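/- Let (aₙ)_{1≤n≤N} ⊂ ℂ with a_N = 1 and b : ℝᵈ → ℂ a polynomial symbol whose homogeneous top part b_M (degree M, nonzero) satisfies ε^M b(ε^{−1}ξ) → b_M(ξ) as ε → 0 for each fixed ξ with b_M(ξ) ≠ 0. For ε > 0, let λ_ε be any root of the polynomial Σ_{n=1}^N aₙ λⁿ = b(ε^{−1}ξ). Then ε^{M/N} λ_ε^N → b_M(ξ) as ε → 0; in particular, |λ_ε| → ∞ and the N roots of the characteristic polynomial are asymptotic (after scaling by ε^{M/N}) to the N distinct N-th roots |b_M(ξ)|^{1/N} e^{iπ(η_M(ξ) + 2n)/N}, n = 1,…,N, of b_M(ξ), where e^{iπη_M(ξ)}|b_M(ξ)| = b_M(ξ). -/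

import Mathlib

open Real Filter Set
open scoped Topology

/-- Short-time eigenvalue asymptotics (Lemma 4.4): let `λ_ε` be any root of the characteristic
polynomial `Σ_{n=1}^N aₙ λⁿ = b(ε⁻¹ξ)`, where the symbol satisfies
`ε^M b(ε⁻¹ξ) → b_M(ξ) ≠ 0`.  Then `ε^M λ_ε^N → b_M(ξ)` (i.e. `(ε^{M/N}λ_ε)^N → b_M(ξ)`) and
`|λ_ε| → ∞`; moreover the scaled limits are the `N` distinct `N`-th roots
`|b_M(ξ)|^{1/N} e^{iπ(η_M(ξ)+2n)/N}`, `n = 1,…,N`, of `b_M(ξ) = e^{iπη_M(ξ)}|b_M(ξ)|`. -/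
theorem companion_eigenvalue_short_time_asymptotics
    (d N M : ℕ) (hN : 0 < N) (hM : 0 < M)
    (a : ℕ → ℂ) (haN : a N = 1)
    (ξ : EuclideanSpace ℝ (Fin d))
    (b : EuclideanSpace ℝ (Fin d) → ℂ)
    (bM : ℂ) (hbM : bM ≠ 0)
    (η : ℝ) (hη : bM = Complex.exp (Real.pi * η * Complex.I) * (‖bM‖ : ℂ))
    (hsymb : Tendsto (fun ε : ℝ => (ε : ℂ) ^ M * b (ε⁻¹ • ξ)) (𝓝[>] 0) (𝓝 bM))
    (lam : ℝ → ℂ) (ε₀ : ℝ) (hε₀ : 0 < ε₀)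
    (hroot : ∀ ε ∈ Ioo (0:ℝ) ε₀, ∑ n ∈ Finset.Icc 1 N, a n * lam ε ^ n = b (ε⁻¹ • ξ)) :
    Tendsto (fun ε : ℝ => (ε : ℂ) ^ M * lam ε ^ N) (𝓝[>] 0) (𝓝 bM) ∧
    Tendsto (fun ε : ℝ => ‖lam ε‖) (𝓝[>] 0) atTop ∧
    (∀ n : Fin N,
      (((‖bM‖ ^ ((1:ℝ) / N) : ℝ) : ℂ) *
          Complex.exp (Real.pi * (η + 2 * ((n : ℕ) + 1)) / N * Complex.I)) ^ N = bM) ∧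
    Function.Injective (fun n : Fin N =>
      (((‖bM‖ ^ ((1:ℝ) / N) : ℝ) : ℂ) *
        Complex.exp (Real.pi * (η + 2 * ((n : ℕ) + 1)) / N * Complex.I))) := by
  have hNR : (N:ℝ) ≠ 0 := Nat.cast_ne_zero.mpr hN.ne'
  have hNC : (N:ℂ) ≠ 0 := Nat.cast_ne_zero.mpr hN.ne'
  have hrn : (0:ℝ) ≤ ‖bM‖ := norm_nonneg _
  -- Part 3 : N-th roots
  have part3 : ∀ n : Fin N,
      (((‖bM‖ ^ ((1:ℝ) / N) : ℝ) : ℂ) *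
          Complex.exp (Real.pi * (η + 2 * ((n : ℕ) + 1)) / N * Complex.I)) ^ N = bM := by
    intro n
    have hexp : (↑N : ℂ) * (Real.pi * (η + 2 * ((n : ℕ) + 1)) / N * Complex.I)
        = Real.pi * η * Complex.I
          + (((n : ℕ) + 1 : ℤ) : ℂ) * (2 * Real.pi * Complex.I) := by
      field_simp
      push_cast
      ring
    rw [mul_pow, ← Complex.ofReal_pow, ← Real.rpow_natCast (‖bM‖ ^ ((1:ℝ)/N)) N,
      ← Real.rpow_mul hrn, one_div, inv_mul_cancel₀ hNR, Real.rpow_one,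
      ← Complex.exp_nat_mul, hexp, Complex.exp_add,
      Complex.exp_int_mul_two_pi_mul_I, mul_one]
    conv_rhs => rw [hη]
    ring
  -- Part 4 : injectivity
  have part4 : Function.Injective (fun n : Fin N =>
      (((‖bM‖ ^ ((1:ℝ) / N) : ℝ) : ℂ) *
        Complex.exp (Real.pi * (η + 2 * ((n : ℕ) + 1)) / N * Complex.I))) := by
    intro n m h
    simp only at h
    have hc : ((‖bM‖ ^ ((1:ℝ)/N) : ℝ) : ℂ) ≠ 0 := by
      exact_mod_cast (Real.rpow_pos_of_pos (norm_pos_iff.mpr hbM) _).ne'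
    have h2 := mul_left_cancel₀ hc h
    rw [Complex.exp_eq_exp_iff_exists_int] at h2
    obtain ⟨k, hk⟩ := h2
    have h3 := congrArg Complex.im hk
    push_cast at h3
    simp [Complex.add_im, Complex.mul_im, Complex.div_im, Complex.mul_re] at h3
    have h5 : (2*Real.pi) * ((n:ℕ):ℝ) = (2*Real.pi) * (((m:ℕ):ℝ) + k*N) := by
      field_simp at h3
      linear_combination Real.pi * h3
    have h6 := mul_left_cancel₀ (by positivity : (2*Real.pi) ≠ 0) h5
    have hn' : ((n:ℕ):ℝ) < N := by exact_mod_cast n.isLt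
    have hm' : ((m:ℕ):ℝ) < N := by exact_mod_cast m.isLt
    have hn0 : (0:ℝ) ≤ ((n:ℕ):ℝ) := Nat.cast_nonneg _
    have hm0 : (0:ℝ) ≤ ((m:ℕ):ℝ) := Nat.cast_nonneg _
    have hNpos : (0:ℝ) < N := by exact_mod_cast hN
    have hk0 : k = 0 := by
      rcases lt_trichotomy k 0 with hlt | heq | hgt
      · exfalso
        have hk1 : (k:ℝ) ≤ -1 := by
          have : k ≤ -1 := by omega
          exact_mod_cast this
        have := mul_le_mul_of_nonneg_right hk1 hNpos.le
        linarith
      · exact heq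
      · exfalso
        have hk1 : (1:ℝ) ≤ k := by
          have : 1 ≤ k := by omega
          exact_mod_cast this
        have := mul_le_mul_of_nonneg_right hk1 hNpos.le
        linarith
    subst hk0
    have : ((n:ℕ):ℝ) = ((m:ℕ):ℝ) := by push_cast at h6; linarith
    have : (n:ℕ) = (m:ℕ) := by exact_mod_cast this
    exact Fin.ext this
  -- Analytic part
  obtain ⟨N', rfl⟩ : ∃ N', N = N' + 1 := ⟨N - 1, (Nat.succ_pred_eq_of_pos hN).symm⟩
  set f : ℝ → ℂ := fun ε => b (ε⁻¹ • ξ) with hf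
  have hroot' : ∀ ε ∈ Ioo (0:ℝ) ε₀, ∑ n ∈ Finset.Icc 1 (N' + 1), a n * lam ε ^ n = f ε := hroot
  have hmem : ∀ᶠ ε in 𝓝[>] (0:ℝ), ε ∈ Ioo (0:ℝ) ε₀ :=
    Ioo_mem_nhdsGT_of_mem ⟨le_refl 0, hε₀⟩
  have hpow0 : Tendsto (fun ε : ℝ => ε ^ M) (𝓝[>] (0:ℝ)) (𝓝[>] (0:ℝ)) := by
    rw [tendsto_nhdsWithin_iff]
    constructor
    · have h := ((continuous_pow M).tendsto (0:ℝ)).mono_left (nhdsWithin_le_nhds (s := Ioi (0:ℝ)))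
      simpa [zero_pow hM.ne'] using h
    · filter_upwards [self_mem_nhdsWithin] with ε hε
      exact pow_pos (Set.mem_Ioi.mp hε) M
  have hnormg : Tendsto (fun ε : ℝ => ‖(ε:ℂ) ^ M * f ε‖) (𝓝[>] (0:ℝ)) (𝓝 ‖bM‖) := hsymb.norm
  have hgf : ∀ ε : ℝ, 0 < ε → ‖(ε:ℂ) ^ M * f ε‖ = ε ^ M * ‖f ε‖ := by
    intro ε hε
    rw [norm_mul, norm_pow, Complex.norm_real, Real.norm_eq_abs, abs_of_pos hε]
  have hfinfty : Tendsto (fun ε : ℝ => ‖f ε‖) (𝓝[>] (0:ℝ)) atTop := by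
    have h1 : Tendsto (fun ε : ℝ => ‖(ε:ℂ) ^ M * f ε‖ * (ε ^ M)⁻¹) (𝓝[>] (0:ℝ)) atTop :=
      Tendsto.pos_mul_atTop (norm_pos_iff.mpr hbM) hnormg hpow0.inv_tendsto_nhdsGT_zero
    apply h1.congr'
    filter_upwards [self_mem_nhdsWithin] with ε (hε : ε ∈ Ioi (0:ℝ))
    have hεM : (0:ℝ) < ε ^ M := pow_pos hε M
    rw [hgf ε hε]
    field_simp
  have hlamtop : Tendsto (fun ε : ℝ => ‖lam ε‖) (𝓝[>] (0:ℝ)) atTop := by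
    rw [tendsto_atTop]
    intro C
    have hev := hfinfty.eventually_ge_atTop
      ((∑ n ∈ Finset.Icc 1 (N' + 1), ‖a n‖ * (max C 1) ^ n) + 1)
    filter_upwards [hmem, hev] with ε hεI hεf
    by_contra hcon
    push_neg at hcon
    have hle : ‖lam ε‖ ≤ max C 1 := hcon.le.trans (le_max_left _ _)
    have hb : ‖f ε‖ ≤ ∑ n ∈ Finset.Icc 1 (N' + 1), ‖a n‖ * (max C 1) ^ n := by
      rw [← hroot' ε hεI]
      refine le_trans (norm_sum_le _ _) (Finset.sum_le_sum ?_)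
      intro i _
      rw [norm_mul, norm_pow]
      exact mul_le_mul_of_nonneg_left (pow_le_pow_left₀ (norm_nonneg _) hle i) (norm_nonneg _)
    linarith
  set S : ℝ := ∑ n ∈ Finset.Icc 1 N', ‖a n‖ with hS
  have hSnn : 0 ≤ S := Finset.sum_nonneg fun _ _ => norm_nonneg _
  have hsplit : ∀ ε ∈ Ioo (0:ℝ) ε₀,
      lam ε ^ (N' + 1) = f ε - ∑ n ∈ Finset.Icc 1 N', a n * lam ε ^ n := by
    intro ε hε
    have h0 := hroot' ε hε
    rw [Finset.sum_Icc_succ_top (Nat.le_add_left 1 N'), haN, one_mul] at h0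
    linear_combination h0
  have htailbd : ∀ ε ∈ Ioo (0:ℝ) ε₀, 1 ≤ ‖lam ε‖ →
      ‖∑ n ∈ Finset.Icc 1 N', a n * lam ε ^ n‖ ≤ S * ‖lam ε‖ ^ N' := by
    intro ε hε h1
    refine le_trans (norm_sum_le _ _) ?_
    rw [hS, Finset.sum_mul]
    refine Finset.sum_le_sum ?_
    intro i hi
    rw [norm_mul, norm_pow]
    refine mul_le_mul_of_nonneg_left ?_ (norm_nonneg _)
    exact pow_le_pow_right₀ h1 (Finset.mem_Icc.mp hi).2
  have hevlam := hlamtop.eventually_ge_atTop (max 1 (2 * S + 1))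
  have hevg : ∀ᶠ ε : ℝ in 𝓝[>] (0:ℝ), ‖(ε:ℂ) ^ M * f ε‖ ≤ ‖bM‖ + 1 := by
    exact Filter.Tendsto.eventually_le_const (by linarith) hnormg
  have hKbound : ∀ᶠ ε : ℝ in 𝓝[>] (0:ℝ),
      ε ^ M * ‖lam ε‖ ^ (N' + 1) ≤ 2 * (‖bM‖ + 1) := by
    filter_upwards [hmem, hevlam, hevg] with ε hεI hlb hg
    have h1 : (1:ℝ) ≤ ‖lam ε‖ := (le_max_left _ _).trans hlb
    have h2 : 2 * S + 1 ≤ ‖lam ε‖ := (le_max_right _ _).trans hlb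
    have hpow : ‖lam ε‖ ^ (N' + 1) ≤ ‖f ε‖ + S * ‖lam ε‖ ^ N' := by
      calc ‖lam ε‖ ^ (N' + 1) = ‖lam ε ^ (N' + 1)‖ := (norm_pow _ _).symm
        _ = ‖f ε - ∑ n ∈ Finset.Icc 1 N', a n * lam ε ^ n‖ := by rw [hsplit ε hεI]
        _ ≤ ‖f ε‖ + ‖∑ n ∈ Finset.Icc 1 N', a n * lam ε ^ n‖ := norm_sub_le _ _
        _ ≤ ‖f ε‖ + S * ‖lam ε‖ ^ N' := by linarith [htailbd ε hεI h1]
    have hpnn : (0:ℝ) ≤ ‖lam ε‖ ^ N' := pow_nonneg (norm_nonneg _) _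
    have hhalf : S * ‖lam ε‖ ^ N' ≤ (‖lam ε‖ / 2) * ‖lam ε‖ ^ N' :=
      mul_le_mul_of_nonneg_right (by linarith) hpnn
    have hfb : ‖lam ε‖ ^ (N' + 1) ≤ 2 * ‖f ε‖ := by
      have hps : ‖lam ε‖ ^ (N' + 1) = ‖lam ε‖ ^ N' * ‖lam ε‖ := pow_succ _ _
      nlinarith
    have hεnn : (0:ℝ) ≤ ε ^ M := pow_nonneg hεI.1.le M
    calc ε ^ M * ‖lam ε‖ ^ (N' + 1) ≤ ε ^ M * (2 * ‖f ε‖) :=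
          mul_le_mul_of_nonneg_left hfb hεnn
      _ = 2 * ‖(ε:ℂ) ^ M * f ε‖ := by rw [hgf ε hεI.1]; ring
      _ ≤ 2 * (‖bM‖ + 1) := by linarith
  have htail : Tendsto (fun ε : ℝ => (ε:ℂ) ^ M * ∑ n ∈ Finset.Icc 1 N', a n * lam ε ^ n)
      (𝓝[>] (0:ℝ)) (𝓝 0) := by
    apply squeeze_zero_norm' (a := fun ε : ℝ => S * (2 * (‖bM‖ + 1)) / ‖lam ε‖)
    · filter_upwards [hmem, hevlam, hKbound] with ε hεI hlb hK
      have h1 : (1:ℝ) ≤ ‖lam ε‖ := (le_max_left _ _).trans hlb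
      have hlbpos : (0:ℝ) < ‖lam ε‖ := lt_of_lt_of_le one_pos h1
      have hεnn : (0:ℝ) ≤ ε ^ M := pow_nonneg hεI.1.le M
      rw [norm_mul, norm_pow, Complex.norm_real, Real.norm_eq_abs, abs_of_pos hεI.1,
        le_div_iff₀ hlbpos]
      calc ε ^ M * ‖∑ n ∈ Finset.Icc 1 N', a n * lam ε ^ n‖ * ‖lam ε‖
          ≤ ε ^ M * (S * ‖lam ε‖ ^ N') * ‖lam ε‖ := by
            refine mul_le_mul_of_nonneg_right
              (mul_le_mul_of_nonneg_left (htailbd ε hεI h1) hεnn) hlbpos.le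
        _ = S * (ε ^ M * ‖lam ε‖ ^ (N' + 1)) := by rw [pow_succ]; ring
        _ ≤ S * (2 * (‖bM‖ + 1)) := mul_le_mul_of_nonneg_left hK hSnn
    · exact tendsto_const_nhds.div_atTop hlamtop
  have hmain : Tendsto (fun ε : ℝ => (ε:ℂ) ^ M * lam ε ^ (N' + 1)) (𝓝[>] (0:ℝ)) (𝓝 bM) := by
    have h := hsymb.sub htail
    rw [sub_zero] at h
    apply h.congr'
    filter_upwards [hmem] with ε hεI
    rw [hsplit ε hεI]
    ring
  exact ⟨hmain, hlamtop, part3, part4⟩
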